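/- If 𝐗 = (X; Y) is a frame for a Lagrangian subspace of ℝ^{2n} and M² := (XᵀX + YᵀY)⁻¹, then X M² Xᵀ + Y M² Yᵀ = Iₙ and X M² Yᵀ − Y M² Xᵀ = 0. -/

import Mathlib

open Matrix

noncomputable section

/-- The standard symplectic matrix `J = [[0, -I],[I, 0]]` on `ℝ^{2n}`,
with `ℝ^{2n}` modeled as `Fin n ⊕ Fin n → ℝ`. -/
def Jmat (n : ℕ) : Matrix (Fin n ⊕ Fin n) (Fin n ⊕ Fin n) ℝ :=
  Matrix.fromBlocks 0 (-1) 1 0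

/-- A subspace `ℓ ⊆ ℝ^{2n}` is Lagrangian if it has dimension `n` and
`(Jx, y) = 0` for all `x, y ∈ ℓ`. -/
def IsLagrangian (n : ℕ) (ℓ : Submodule ℝ (Fin n ⊕ Fin n → ℝ)) : Prop :=
  Module.finrank ℝ ℓ = n ∧ ∀ x ∈ ℓ, ∀ y ∈ ℓ, (Jmat n).mulVec x ⬝ᵥ y = 0

/-- A `2n × n` matrix `M` is a frame for the subspace `ℓ ⊆ ℝ^{2n}` if its
columns are linearly independent and span `ℓ` (i.e. form a basis of `ℓ`). -/
def IsFrameOf (n : ℕ) (M : Matrix (Fin n ⊕ Fin n) (Fin n) ℝ)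
    (ℓ : Submodule ℝ (Fin n ⊕ Fin n → ℝ)) : Prop :=
  LinearIndependent ℝ (fun j : Fin n => fun i => M i j) ∧
    Submodule.span ℝ (Set.range (fun j : Fin n => fun i => M i j)) = ℓ

/-- The `2n × n` matrix `𝐗 = (X; Y)` with `n × n` blocks `X` and `Y` stacked
vertically. -/
def vframe {n : ℕ} (X Y : Matrix (Fin n) (Fin n) ℝ) :
    Matrix (Fin n ⊕ Fin n) (Fin n) ℝ :=
  Matrix.fromRows X Y

/-- The complex matrix `X + iY` built from real matrices `X` and `Y`. -/
def cplx {n : ℕ} (X Y : Matrix (Fin n) (Fin n) ℝ) : Matrix (Fin n) (Fin n) ℂ :=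
  X.map (fun a => (a : ℂ)) + Complex.I • Y.map (fun a => (a : ℂ))

end

section Aux

variable {n : ℕ}

/-- Complexification of a real matrix. -/
private noncomputable def CM (M : Matrix (Fin n) (Fin n) ℝ) : Matrix (Fin n) (Fin n) ℂ :=
  M.map (Complex.ofRealHom ·)

private lemma CM_mul (M N : Matrix (Fin n) (Fin n) ℝ) : CM (M * N) = CM M * CM N :=
  Matrix.map_mul

private lemma CM_add (M N : Matrix (Fin n) (Fin n) ℝ) : CM (M + N) = CM M + CM N := by
  ext i j; simp [CM]

private lemma CM_conjT (M : Matrix (Fin n) (Fin n) ℝ) : (CM M)ᴴ = CM Mᵀ := by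
  ext i j; simp [CM, Matrix.conjTranspose_apply]

private lemma CM_one : CM (1 : Matrix (Fin n) (Fin n) ℝ) = 1 := by
  ext i j; simp [CM, Matrix.one_apply]; split <;> simp

private lemma CM_ext {P Q P' Q' : Matrix (Fin n) (Fin n) ℝ}
    (h : CM P + Complex.I • CM Q = CM P' + Complex.I • CM Q') : P = P' ∧ Q = Q' := by
  constructor <;> ext i j <;>
  · have := congrFun (congrFun h i) j
    simp [CM, Complex.ext_iff] at this
    tauto

private lemma aux_isUnit (X Y : Matrix (Fin n) (Fin n) ℝ)
    (hli : LinearIndependent ℝ (fun j : Fin n => fun i => Matrix.fromRows X Y i j)) :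
    IsUnit (Xᵀ * X + Yᵀ * Y) := by
  set F := Matrix.fromRows X Y with hF
  have hAF : Xᵀ * X + Yᵀ * Y = Fᵀ * F := by
    rw [hF, Matrix.transpose_fromRows, Matrix.fromCols_mul_fromRows]
  have hFinj : Function.Injective F.mulVec := by
    rw [Matrix.mulVec_injective_iff]
    exact hli
  rw [hAF, ← Matrix.mulVec_injective_iff_isUnit]
  intro v w hvw
  have h0 : (Fᵀ * F) *ᵥ (v - w) = 0 := by
    rw [Matrix.mulVec_sub, hvw, sub_self]
  have h1 : (F *ᵥ (v - w)) ⬝ᵥ (F *ᵥ (v - w)) = 0 := by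
    have : (v - w) ⬝ᵥ ((Fᵀ * F) *ᵥ (v - w)) = 0 := by rw [h0, dotProduct_zero]
    rwa [← Matrix.mulVec_mulVec, Matrix.dotProduct_mulVec, Matrix.vecMul_transpose] at this
  have h2 : F *ᵥ (v - w) = 0 := by
    rwa [dotProduct_self_eq_zero] at h1
  have := hFinj (by rw [h2, Matrix.mulVec_zero] : F *ᵥ (v - w) = F *ᵥ 0)
  exact sub_eq_zero.mp this

private lemma aux_ZhZ (X Y A : Matrix (Fin n) (Fin n) ℝ) (hsym : Xᵀ * Y = Yᵀ * X)
    (hA : A = Xᵀ * X + Yᵀ * Y) :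
    (CM X + Complex.I • CM Y)ᴴ * (CM X + Complex.I • CM Y) = CM A := by
  rw [Matrix.conjTranspose_add, CM_conjT, Matrix.conjTranspose_smul, CM_conjT,
    Complex.star_def, Complex.conj_I]
  simp only [neg_smul, Matrix.neg_mul, Matrix.mul_neg, Matrix.add_mul, Matrix.mul_add,
    smul_mul_assoc, mul_smul_comm, smul_smul, Complex.I_mul_I, neg_neg, one_smul,
    smul_add, smul_sub, smul_neg,
    ← CM_mul, hsym, hA, CM_add]
  abel

private lemma aux_extract (X Y B : Matrix (Fin n) (Fin n) ℝ)
    (h : (CM X + Complex.I • CM Y) * CM B * (CM X + Complex.I • CM Y)ᴴ = 1) :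
    X * B * Xᵀ + Y * B * Yᵀ = 1 ∧ Y * B * Xᵀ - X * B * Yᵀ = 0 := by
  have hexp : CM (X * B * Xᵀ + Y * B * Yᵀ) + Complex.I • CM (Y * B * Xᵀ - X * B * Yᵀ)
      = CM 1 + Complex.I • CM 0 := by
    rw [CM_one]
    have h0 : CM (0 : Matrix (Fin n) (Fin n) ℝ) = 0 := by ext i j; simp [CM]
    rw [h0, smul_zero, add_zero, ← h]
    rw [Matrix.conjTranspose_add, CM_conjT, Matrix.conjTranspose_smul, CM_conjT,
      Complex.star_def, Complex.conj_I]
    have hsub : CM (Y * B * Xᵀ - X * B * Yᵀ) = CM (Y * B * Xᵀ) - CM (X * B * Yᵀ) := by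
      ext i j; simp [CM]
    rw [hsub]
    simp only [neg_smul, Matrix.neg_mul, Matrix.mul_neg, Matrix.add_mul, Matrix.mul_add,
      smul_mul_assoc, mul_smul_comm, smul_smul, Complex.I_mul_I, neg_neg, one_smul,
      smul_add, smul_sub, smul_neg,
      ← CM_mul, CM_add]
    abel
  exact CM_ext hexp

end Aux

/-- For a Lagrangian frame `(X; Y)` and `M² = (XᵀX + YᵀY)⁻¹`, one
has `X M² Xᵀ + Y M² Yᵀ = I` and `X M² Yᵀ - Y M² Xᵀ = 0`. -/
theorem lagrangian_frame_M_identities (n : ℕ) (X Y : Matrix (Fin n) (Fin n) ℝ)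
    (ℓ : Submodule ℝ (Fin n ⊕ Fin n → ℝ)) (hℓ : IsLagrangian n ℓ)
    (hf : IsFrameOf n (vframe X Y) ℓ) :
    X * (Xᵀ * X + Yᵀ * Y)⁻¹ * Xᵀ + Y * (Xᵀ * X + Yᵀ * Y)⁻¹ * Yᵀ = 1 ∧
      X * (Xᵀ * X + Yᵀ * Y)⁻¹ * Yᵀ - Y * (Xᵀ * X + Yᵀ * Y)⁻¹ * Xᵀ = 0 := by
  -- symmetry of XᵀY
  have hcol : ∀ j, (fun i => vframe X Y i j) ∈ ℓ := fun j => by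
    rw [← hf.2]; exact Submodule.subset_span ⟨j, rfl⟩
  have hsym : Xᵀ * Y = Yᵀ * X := by
    ext j k
    have h := hℓ.2 _ (hcol j) _ (hcol k)
    simp [Jmat, mulVec, dotProduct, Fintype.sum_sum_type, vframe, Matrix.fromBlocks,
      Matrix.fromRows_apply_inl, Matrix.fromRows_apply_inr, mul_apply, Matrix.one_apply, ite_mul, one_mul, zero_mul,
      Finset.sum_ite_eq] at h ⊢
    linarith [h]
  set A := Xᵀ * X + Yᵀ * Y with hAdef
  have hA : IsUnit A := aux_isUnit X Y hf.1
  have hAdet : IsUnit A.det := (Matrix.isUnit_iff_isUnit_det _).mp hA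
  set Z := CM X + Complex.I • CM Y with hZdef
  have hZA : Zᴴ * Z = CM A := aux_ZhZ X Y A hsym hAdef
  -- CM A is a unit and its inverse is CM A⁻¹
  have hCA1 : CM A * CM A⁻¹ = 1 := by
    rw [← CM_mul, Matrix.mul_nonsing_inv _ hAdet, CM_one]
  have hCAinv : (CM A)⁻¹ = CM A⁻¹ := Matrix.inv_eq_right_inv hCA1
  have hCAdet : IsUnit (CM A).det :=
    IsUnit.of_mul_eq_one _ (by rw [← Matrix.det_mul, hCA1, Matrix.det_one])
  -- Z is invertible
  have hZdet : IsUnit Z.det := by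
    have : Zᴴ.det * Z.det = (CM A).det := by rw [← Matrix.det_mul, hZA]
    exact isUnit_of_mul_isUnit_right (this ▸ hCAdet)
  have hZHdet : IsUnit Zᴴ.det := by
    have : Zᴴ.det * Z.det = (CM A).det := by rw [← Matrix.det_mul, hZA]
    exact isUnit_of_mul_isUnit_left (this ▸ hCAdet)
  -- key identity: Z (CM A⁻¹) Zᴴ = 1
  have hkey : Z * CM A⁻¹ * Zᴴ = 1 := by
    rw [← hCAinv, ← hZA, Matrix.mul_inv_rev, ← Matrix.mul_assoc,
      Matrix.mul_nonsing_inv _ hZdet, Matrix.one_mul, Matrix.nonsing_inv_mul _ hZHdet]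
  obtain ⟨h1, h2⟩ := aux_extract X Y A⁻¹ hkey
  refine ⟨h1, ?_⟩
  rw [← neg_sub, h2, neg_zero]
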